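/- arXiv:2210.15992 — 8 statements merged into one kernel-verified Lean document; each statement's English description precedes it below -/
import Mathlib

section
/- If u: I → ℝ is a C⁴ function of one variable and w = u', then the graph {(x, y, u(x))} satisfies the Willmore graphic equation div((1/v)((Id - ∇u⊗∇u/v²)∇(vH) - (1/2)H²∇u)) = 0 (with v = √(1+|∇u|²), H = div(∇u/v)) if and only if d/dx [ (w''(1+w²) - (5/2)w(w')²) / (1+w²)^{7/2} ] = 0 on I. -/
/-- For a C⁴ function `u` of one variable with `w = u'`, the cylinder graph
`{(x, y, u(x))}` satisfies the Willmore graphic equation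
`div((1/v)((Id - ∇u⊗∇u/v²)∇(vH) - (1/2)H²∇u)) = 0` (with `v = √(1+|∇u|²)`, `H = div(∇u/v)`,
which for `u(x,y) = u(x)` reduces to the one-variable expression `Φ` below) if and only if
`d/dx [ (w''(1+w²) - (5/2)w(w')²) / (1+w²)^{7/2} ] = 0` on `I`. -/
theorem stmt0 (I : Set ℝ) (hI : IsOpen I) (u : ℝ → ℝ) (hu : ContDiffOn ℝ 4 u I)
    (w v H Φ Ψ : ℝ → ℝ)
    (hw : w = deriv u)
    (hv : ∀ x, v x = Real.sqrt (1 + (w x) ^ 2))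
    (hH : ∀ x, H x = deriv (fun y => w y / v y) x)
    -- the vector field `(1/v)((Id - ∇u⊗∇u/v²)∇(vH) - (1/2)H²∇u)` points in the `x`-direction
    -- with component `Φ`, so its divergence is `Φ'`:
    (hΦ : ∀ x, Φ x = (1 / v x) * ((1 - (w x) ^ 2 / (v x) ^ 2) * deriv (fun y => v y * H y) x
      - (1 / 2) * (H x) ^ 2 * w x))
    (hΨ : ∀ x, Ψ x = (deriv (deriv w) x * (1 + (w x) ^ 2) - (5 / 2) * w x * (deriv w x) ^ 2)
      / (1 + (w x) ^ 2) ^ ((7 : ℝ) / 2)) :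
    (∀ x ∈ I, deriv Φ x = 0) ↔ (∀ x ∈ I, deriv Ψ x = 0) := by
  have hvs : v = fun t => Real.sqrt (1 + w t ^ 2) := funext hv
  have hpos : ∀ y : ℝ, (0:ℝ) < 1 + w y ^ 2 := fun y => by positivity
  have hvpos : ∀ y : ℝ, 0 < v y := fun y => by rw [hv]; exact Real.sqrt_pos.2 (hpos y)
  have hvsq : ∀ y : ℝ, v y ^ 2 = 1 + w y ^ 2 := fun y => by
    rw [hv]; exact Real.sq_sqrt (hpos y).le
  have hw3 : ContDiffOn ℝ 3 w I := by
    rw [hw]; exact hu.deriv_of_isOpen hI (by norm_num)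
  have hw2 : ContDiffOn ℝ 2 (deriv w) I := hw3.deriv_of_isOpen hI (by norm_num)
  have hdw : ∀ y ∈ I, HasDerivAt w (deriv w y) y := fun y hy =>
    ((hw3.differentiableOn (by norm_num)).differentiableAt (hI.mem_nhds hy)).hasDerivAt
  have hdw1 : ∀ y ∈ I, HasDerivAt (deriv w) (deriv (deriv w) y) y := fun y hy =>
    ((hw2.differentiableOn (by norm_num)).differentiableAt (hI.mem_nhds hy)).hasDerivAt
  have hdq : ∀ y ∈ I, HasDerivAt (fun t => 1 + w t ^ 2) (2 * w y * deriv w y) y := by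
    intro y hy
    have h := ((hdw y hy).pow 2).const_add (1:ℝ)
    simpa [mul_comm, mul_assoc, mul_left_comm] using h
  have hdv : ∀ y ∈ I, HasDerivAt v (w y * deriv w y / v y) y := by
    intro y hy
    have h := (hdq y hy).sqrt (hpos y).ne'
    rw [hvs]
    convert h using 1
    rw [← hv y]
    field_simp [(hvpos y).ne']
    rw [hv y]
  have hHval : ∀ y ∈ I, H y = deriv w y / v y ^ 3 := by
    intro y hy
    rw [hH]
    show deriv (w / v) y = _
    rw [((hdw y hy).div (hdv y hy) (hvpos y).ne').deriv]
    have hv0 := (hvpos y).ne'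
    field_simp
    linear_combination (deriv w y) * hvsq y
  have keyEq : ∀ x ∈ I, Φ x = Ψ x := by
    intro x hx
    have heq : (fun y => v y * H y) =ᶠ[nhds x] fun y => deriv w y / (1 + w y ^ 2) := by
      filter_upwards [hI.mem_nhds hx] with y hy
      rw [hHval y hy, ← hvsq y]
      have hv0 := (hvpos y).ne'
      field_simp
    have hD : deriv (fun y => v y * H y) x =
        (deriv (deriv w) x * (1 + w x ^ 2) - deriv w x * (2 * w x * deriv w x))
          / (1 + w x ^ 2) ^ 2 := by
      rw [heq.deriv_eq]
      exact ((hdw1 x hx).div (hdq x hx) (hpos x).ne').deriv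
    have h7 : (1 + w x ^ 2) ^ ((7:ℝ)/2) = v x ^ 7 := by
      rw [hv, Real.sqrt_eq_rpow, ← Real.rpow_natCast ((1 + w x ^ 2) ^ ((1:ℝ)/2)) 7,
        ← Real.rpow_mul (hpos x).le]
      norm_num
    rw [hΦ, hΨ, hD, hHval x hx, h7, ← hvsq x]
    have hv0 := (hvpos x).ne'
    field_simp
    linear_combination (2 * v x ^ 2 * deriv (deriv w) x - 4 * w x * deriv w x ^ 2) * hvsq x
  constructor <;> intro h x hx
  · have : deriv Ψ x = deriv Φ x := by
      apply Filter.EventuallyEq.deriv_eq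
      filter_upwards [hI.mem_nhds hx] with y hy
      exact (keyEq y hy).symm
    rw [this]; exact h x hx
  · have : deriv Φ x = deriv Ψ x := by
      apply Filter.EventuallyEq.deriv_eq
      filter_upwards [hI.mem_nhds hx] with y hy
      exact keyEq y hy
    rw [this]; exact h x hx
end

section
/- If w: ℝ → ℝ is a C² solution on all of ℝ of w''(1+w²) - (5/2)w(w')² = C(1+w²)^{7/2} for some constant C, then w is constant (and hence C = 0). -/
open Real

noncomputable def Fint : ℝ → ℝ := fun t => ∫ s in (0:ℝ)..t, (1 + s ^ 2) ^ (-(5:ℝ)/4)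

lemma cont_integrand : Continuous fun s : ℝ => (1 + s ^ 2) ^ (-(5:ℝ)/4) := by
  apply Continuous.rpow_const (by continuity)
  intro x; left; positivity

lemma hasDerivAt_Fint (t : ℝ) : HasDerivAt Fint ((1 + t ^ 2) ^ (-(5:ℝ)/4)) t :=
  intervalIntegral.integral_hasDerivAt_right
    (cont_integrand.intervalIntegrable _ _)
    (cont_integrand.stronglyMeasurableAtFilter _ _)
    cont_integrand.continuousAt

lemma Fint_bound (t : ℝ) : |Fint t| ≤ π / 2 := by
  have hle : ∀ s : ℝ, (1 + s ^ 2) ^ (-(5:ℝ)/4) ≤ 1 / (1 + s ^ 2) := by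
    intro s
    have h1 : (1:ℝ) ≤ 1 + s ^ 2 := by nlinarith [sq_nonneg s]
    have h2 := Real.rpow_le_rpow_of_exponent_le h1 (by norm_num : (-(5:ℝ)/4) ≤ -1)
    rwa [Real.rpow_neg_one, ← one_div] at h2
  have hnn : ∀ s : ℝ, 0 ≤ (1 + s ^ 2) ^ (-(5:ℝ)/4) := fun s =>
    Real.rpow_nonneg (by positivity) _
  have hcont2 : Continuous fun s : ℝ => 1 / (1 + s ^ 2) := by
    apply Continuous.div continuous_const (by continuity)
    intro x; positivity
  have hpi := Real.pi_pos
  rcases le_total 0 t with ht | ht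
  · have h1 : 0 ≤ Fint t := intervalIntegral.integral_nonneg ht (fun s _ => hnn s)
    have h2 : Fint t ≤ ∫ s in (0:ℝ)..t, 1 / (1 + s ^ 2) :=
      intervalIntegral.integral_mono_on ht (cont_integrand.intervalIntegrable _ _)
        (hcont2.intervalIntegrable _ _) (fun s _ => hle s)
    rw [integral_one_div_one_add_sq] at h2
    have h3 : arctan t < π / 2 := Real.arctan_lt_pi_div_two t
    have h4 : arctan 0 = 0 := Real.arctan_zero
    rw [abs_le]; constructor <;> linarith
  · have hsymm : Fint t = -∫ s in t..(0:ℝ), (1 + s ^ 2) ^ (-(5:ℝ)/4) := by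
      rw [Fint, intervalIntegral.integral_symm]
    have h1 : 0 ≤ ∫ s in t..(0:ℝ), (1 + s ^ 2) ^ (-(5:ℝ)/4) :=
      intervalIntegral.integral_nonneg ht (fun s _ => hnn s)
    have h2 : (∫ s in t..(0:ℝ), (1 + s ^ 2) ^ (-(5:ℝ)/4)) ≤ ∫ s in t..(0:ℝ), 1 / (1 + s ^ 2) :=
      intervalIntegral.integral_mono_on ht (cont_integrand.intervalIntegrable _ _)
        (hcont2.intervalIntegrable _ _) (fun s _ => hle s)
    rw [integral_one_div_one_add_sq] at h2
    have h3 : -(π / 2) < arctan t := Real.neg_pi_div_two_lt_arctan t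
    have h4 : arctan 0 = 0 := Real.arctan_zero
    rw [hsymm, abs_le]; constructor <;> linarith

lemma key (G g ψ : ℝ → ℝ) (C : ℝ) (hC : 0 < C)
    (hG : ∀ x, HasDerivAt G (g x) x)
    (hg : ∀ x, HasDerivAt g (ψ x) x)
    (hψ : ∀ x, C ≤ ψ x)
    (hbd : ∀ x, |G x| ≤ π / 2) : False := by
  have h1 : ∀ x : ℝ, 0 ≤ x → g 0 + C * x ≤ g x := by
    have hm : Monotone (fun x => g x - C * x) := by
      apply monotone_of_deriv_nonneg
      · intro x
        exact ((hg x).sub (by simpa using (hasDerivAt_id x).const_mul C :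
          HasDerivAt (fun y : ℝ => C * y) C x)).differentiableAt
      · intro x
        have hd : HasDerivAt (fun x => g x - C * x) (ψ x - C) x :=
          (hg x).sub (by simpa using (hasDerivAt_id x).const_mul C)
        rw [hd.deriv]
        have := hψ x
        linarith
    intro x hx
    have h2 := hm hx
    simp only [mul_zero, sub_zero] at h2
    linarith
  have hkd : ∀ x : ℝ, HasDerivAt (fun x => G x - g 0 * x - C / 2 * x ^ 2)
      (g x - g 0 - C * x) x := by
    intro x
    have h2 : HasDerivAt (fun x : ℝ => g 0 * x) (g 0) x := by
      simpa using (hasDerivAt_id x).const_mul (g 0)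
    have h3 : HasDerivAt (fun x : ℝ => C / 2 * x ^ 2) (C / 2 * (2 * x ^ 1)) x :=
      (hasDerivAt_pow 2 x).const_mul (C / 2)
    have h4 := ((hG x).sub h2).sub h3
    exact h4.congr_deriv (by ring)
  have hmono : MonotoneOn (fun x => G x - g 0 * x - C / 2 * x ^ 2) (Set.Ici 0) := by
    apply monotoneOn_of_deriv_nonneg (convex_Ici 0)
    · exact (Differentiable.continuous (fun x => (hkd x).differentiableAt)).continuousOn
    · exact fun x _ => (hkd x).differentiableAt.differentiableWithinAt
    · intro x hx
      rw [interior_Ici] at hx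
      rw [(hkd x).deriv]
      have := h1 x (le_of_lt hx)
      linarith
  set t : ℝ := max 1 ((π + 1 + |g 0|) * 2 / C) with htdef
  have ht1 : (1:ℝ) ≤ t := le_max_left _ _
  have ht0 : (0:ℝ) ≤ t := by linarith
  have ht2 : (π + 1 + |g 0|) * 2 / C ≤ t := le_max_right _ _
  have hA : (π + 1 + |g 0|) * 2 ≤ t * C := (div_le_iff₀ hC).mp ht2
  have hCt : (π + 1 + |g 0|) * t ≤ C / 2 * t ^ 2 := by nlinarith
  have hk0 : G 0 - g 0 * 0 - C / 2 * 0 ^ 2 ≤ G t - g 0 * t - C / 2 * t ^ 2 :=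
    hmono (Set.mem_Ici.mpr le_rfl) (Set.mem_Ici.mpr ht0) ht0
  have hg0t : -|g 0| * t ≤ g 0 * t := mul_le_mul_of_nonneg_right (neg_abs_le _) ht0
  have hb1 := abs_le.mp (hbd t)
  have hb2 := abs_le.mp (hbd 0)
  have hpi := Real.pi_pos
  nlinarith

/-- If `w : ℝ → ℝ` is a C² solution on all of `ℝ` of
`w''(1+w²) - (5/2)w(w')² = C(1+w²)^{7/2}`, then `w` is constant (and hence `C = 0`). -/
theorem stmt2 (w : ℝ → ℝ) (C : ℝ) (hw : ContDiff ℝ 2 w)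
    (hode : ∀ x : ℝ, deriv (deriv w) x * (1 + (w x) ^ 2)
      - (5 / 2) * w x * (deriv w x) ^ 2 = C * (1 + (w x) ^ 2) ^ ((7 : ℝ) / 2)) :
    (∃ c : ℝ, ∀ x : ℝ, w x = c) ∧ C = 0 := by
  have hw1 : Differentiable ℝ w := hw.differentiable (by norm_num)
  have hw2 : Differentiable ℝ (deriv w) := by
    have h : ContDiff ℝ (1 + 1) w := by norm_num; exact hw
    exact (contDiff_succ_iff_deriv.mp h).2.2.differentiable one_ne_zero
  have hPpos : ∀ x : ℝ, (0:ℝ) < 1 + w x ^ 2 := fun x => by positivity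
  set g : ℝ → ℝ := fun x => deriv w x * (1 + w x ^ 2) ^ (-(5:ℝ)/4) with hgdef
  have hgD : ∀ x, HasDerivAt g (C * (1 + w x ^ 2) ^ ((5:ℝ)/4)) x := by
    intro x
    have hPd : HasDerivAt (fun x : ℝ => 1 + w x ^ 2) (2 * w x ^ 1 * deriv w x) x := by
      simpa using (((hw1 x).hasDerivAt.pow 2).const_add 1)
    have hQ := hPd.rpow_const (p := (-(5:ℝ)/4)) (Or.inl (hPpos x).ne')
    have hmul := (hw2 x).hasDerivAt.mul hQ
    refine hmul.congr_deriv (Eq.symm ?_)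
    have hpos := hPpos x
    have e1 : (1 + w x ^ 2) ^ (-(5:ℝ)/4) = (1 + w x ^ 2) * (1 + w x ^ 2) ^ (-(9:ℝ)/4) := by
      rw [show (-(5:ℝ)/4) = 1 + (-(9:ℝ)/4) by norm_num, Real.rpow_add hpos, Real.rpow_one]
    have e2 : (1 + w x ^ 2) ^ ((-(5:ℝ)/4) - 1) = (1 + w x ^ 2) ^ (-(9:ℝ)/4) := by norm_num
    have e3 : (1 + w x ^ 2) ^ ((7:ℝ)/2) * (1 + w x ^ 2) ^ (-(9:ℝ)/4)
        = (1 + w x ^ 2) ^ ((5:ℝ)/4) := by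
      rw [← Real.rpow_add hpos]; norm_num
    rw [e1, e2]
    have hode' := hode x
    linear_combination (-((1 + w x ^ 2) ^ (-(9:ℝ)/4))) * hode' - C * e3
  have hGD : ∀ x, HasDerivAt (fun x => Fint (w x)) (g x) x := by
    intro x
    have h := (hasDerivAt_Fint (w x)).comp x (hw1 x).hasDerivAt
    have e : g x = (1 + w x ^ 2) ^ (-(5:ℝ)/4) * deriv w x := by rw [hgdef]; ring
    rw [e]; exact h
  have hbd : ∀ x : ℝ, |Fint (w x)| ≤ π / 2 := fun x => Fint_bound (w x)
  have hone : ∀ x : ℝ, (1:ℝ) ≤ (1 + w x ^ 2) ^ ((5:ℝ)/4) := by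
    intro x
    have h1 : (1:ℝ) ≤ 1 + w x ^ 2 := by nlinarith [sq_nonneg (w x)]
    calc (1:ℝ) = (1:ℝ) ^ ((5:ℝ)/4) := (Real.one_rpow _).symm
    _ ≤ (1 + w x ^ 2) ^ ((5:ℝ)/4) :=
        Real.rpow_le_rpow (by norm_num) h1 (by norm_num)
  have hC0 : C = 0 := by
    rcases lt_trichotomy C 0 with hC | hC | hC
    · exfalso
      apply key (fun x => -Fint (w x)) (fun x => -g x)
        (fun x => -(C * (1 + w x ^ 2) ^ ((5:ℝ)/4))) (-C) (by linarith)
        (fun x => (hGD x).neg) (fun x => (hgD x).neg)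
      · intro x
        have := hone x
        nlinarith
      · intro x; rw [abs_neg]; exact hbd x
    · exact hC
    · exfalso
      apply key (fun x => Fint (w x)) g
        (fun x => C * (1 + w x ^ 2) ^ ((5:ℝ)/4)) C hC hGD hgD
      · intro x
        have := hone x
        nlinarith
      · exact hbd
  subst hC0
  refine ⟨?_, rfl⟩
  have hgD0 : ∀ x, HasDerivAt g 0 x := by
    intro x; simpa using hgD x
  have hgc : ∀ x, g x = g 0 := fun x =>
    is_const_of_deriv_eq_zero (fun y => (hgD0 y).differentiableAt)
      (fun y => (hgD0 y).deriv) x 0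
  have hg0 : g 0 = 0 := by
    by_contra hne
    have hmd : ∀ x : ℝ, HasDerivAt (fun x => Fint (w x) - g 0 * x) 0 x := by
      intro x
      have h2 : HasDerivAt (fun x : ℝ => g 0 * x) (g 0) x := by
        simpa using (hasDerivAt_id x).const_mul (g 0)
      have := (hGD x).sub h2
      rw [hgc x] at this
      exact this.congr_deriv (sub_self _)
    have hm : ∀ x : ℝ, Fint (w x) - g 0 * x = Fint (w 0) - g 0 * 0 := fun x =>
      is_const_of_deriv_eq_zero (fun y => (hmd y).differentiableAt)
        (fun y => (hmd y).deriv) x 0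
    set x₀ : ℝ := (π + 1) / g 0 with hx₀
    have hgx : g 0 * x₀ = π + 1 := by rw [hx₀]; field_simp
    have h3 := hm x₀
    have hb1 := abs_le.mp (hbd x₀)
    have hb2 := abs_le.mp (hbd 0)
    have hpi := Real.pi_pos
    rw [hgx] at h3
    linarith
  have hw' : ∀ x, deriv w x = 0 := by
    intro x
    have h := (hgc x).trans hg0
    simp only [hgdef] at h
    have hA : (0:ℝ) < (1 + w x ^ 2) ^ (-(5:ℝ)/4) := Real.rpow_pos_of_pos (hPpos x) _
    exact (mul_eq_zero.mp h).resolve_right hA.ne'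
  exact ⟨w 0, fun x => is_const_of_deriv_eq_zero hw1 hw' x 0⟩
end

section
/- Let w solve w''(1+w²) - (5/2)w(w')² = C(1+w²)^{7/2} with C > 0, w(0)=0, w'(0)=0, and suppose w(x) > 0 for some x > 0. Then the mean curvature H(x) = w'(x)/(1+w(x)²)^{3/2} satisfies H(x) = √(2C)/(1 + 1/w(x)²)^{1/4} for all x > 0 where w(x) > 0; in particular H(x) → √(2C) as w(x) → +∞. -/
open Set

/-- Let `w : [0,ρ) → ℝ` solve `w''(1+w²) - (5/2)w(w')² = C(1+w²)^{7/2}` with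
`C > 0`, `w(0)=0`, `w'(0)=0`, and suppose `w(x) > 0` for some `x > 0`. Then the mean curvature
`H(x) = w'(x)/(1+w(x)²)^{3/2}` satisfies `H(x) = √(2C)/(1 + 1/w(x)²)^{1/4}` for all `x > 0`
with `w(x) > 0`; in particular `H(x) → √(2C)` as `w(x) → +∞`. -/
theorem stmt5 (ρ : ℝ) (hρ : 0 < ρ) (w H : ℝ → ℝ) (C : ℝ) (hC : 0 < C)
    (hw : ContDiffOn ℝ 2 w (Ioo (-ρ) ρ))
    (hode : ∀ x ∈ Ioo (-ρ) ρ, deriv (deriv w) x * (1 + (w x) ^ 2)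
      - (5 / 2) * w x * (deriv w x) ^ 2 = C * (1 + (w x) ^ 2) ^ ((7 : ℝ) / 2))
    (hw0 : w 0 = 0) (hw'0 : deriv w 0 = 0)
    (hpos : ∃ x ∈ Ioo 0 ρ, 0 < w x)
    (hH : ∀ x, H x = deriv w x / (1 + (w x) ^ 2) ^ ((3 : ℝ) / 2)) :
    (∀ x ∈ Ioo 0 ρ, 0 < w x →
        H x = Real.sqrt (2 * C) / (1 + 1 / (w x) ^ 2) ^ ((1 : ℝ) / 4))
    ∧ ∀ ε > 0, ∃ M : ℝ, ∀ x ∈ Ioo 0 ρ, M < w x →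
        |H x - Real.sqrt (2 * C)| < ε := by
  have hSopen : IsOpen (Ioo (-ρ) ρ) := isOpen_Ioo
  have hA : ∀ x : ℝ, (0:ℝ) < 1 + (w x) ^ 2 := fun x => by positivity
  have hw1 : ContDiffOn ℝ 1 (deriv w) (Ioo (-ρ) ρ) :=
    hw.deriv_of_isOpen hSopen (by norm_num)
  have hd1 : ∀ x ∈ Ioo (-ρ) ρ, HasDerivAt w (deriv w x) x := fun x hx =>
    ((hw.differentiableOn (by norm_num)).differentiableAt
      (hSopen.mem_nhds hx)).hasDerivAt
  have hd2 : ∀ x ∈ Ioo (-ρ) ρ, HasDerivAt (deriv w) (deriv (deriv w) x) x := fun x hx =>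
    ((hw1.differentiableOn (by norm_num)).differentiableAt
      (hSopen.mem_nhds hx)).hasDerivAt
  set g : ℝ → ℝ := fun x => (deriv w x) ^ 2 * (1 + (w x) ^ 2) ^ (-(5:ℝ)/2) - 2*C*(w x)
    with hgdef
  have hg : ∀ x ∈ Ioo (-ρ) ρ, HasDerivAt g 0 x := by
    intro x hx
    have h1 := hd1 x hx
    have h2 := hd2 x hx
    have hb : HasDerivAt (fun y => 1 + (w y) ^ 2) (2 * w x * deriv w x) x := by
      simpa using (h1.pow 2).const_add 1
    have hr := hb.rpow_const (p := -(5:ℝ)/2) (Or.inl (ne_of_gt (hA x)))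
    have hsq : HasDerivAt (fun y => (deriv w y) ^ 2)
        (2 * deriv w x * deriv (deriv w) x) x := by
      exact (h2.pow 2).congr_deriv (by norm_num)
    have hmain := (hsq.mul hr).sub (h1.const_mul (2*C))
    refine HasDerivAt.congr_deriv hmain ?_
    symm
    have e2 : (1 + (w x) ^ 2) ^ ((-(5:ℝ)/2) - 1) = (1 + (w x) ^ 2) ^ (-(7:ℝ)/2) := by
      rw [show ((-(5:ℝ)/2) - 1) = (-(7:ℝ)/2) by norm_num]
    have e1 : (1 + (w x) ^ 2) ^ (-(5:ℝ)/2)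
        = (1 + (w x) ^ 2) * (1 + (w x) ^ 2) ^ (-(7:ℝ)/2) := by
      rw [show (-(5:ℝ)/2) = 1 + (-(7:ℝ)/2) by norm_num, Real.rpow_add (hA x),
        Real.rpow_one]
    have e3 : (1 + (w x) ^ 2) ^ (-(7:ℝ)/2) * (1 + (w x) ^ 2) ^ ((7:ℝ)/2) = 1 := by
      rw [← Real.rpow_add (hA x)]; norm_num
    have hodex := hode x hx
    rw [e2, e1]
    linear_combination (-(2:ℝ) * deriv w x * (1 + (w x) ^ 2) ^ (-(7:ℝ)/2)) * hodex
      - (2*C*deriv w x) * e3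
  -- g is constant equal to 0 on [0, ρ)
  have hsub : ∀ x ∈ Ico (0:ℝ) ρ, Icc (0:ℝ) x ⊆ Ioo (-ρ) ρ := by
    intro x hx y hy
    exact ⟨lt_of_lt_of_le (by linarith [hρ]) hy.1, lt_of_le_of_lt hy.2 hx.2⟩
  have hg0 : g 0 = 0 := by simp [hgdef, hw0, hw'0]
  have hgzero : ∀ x ∈ Ico (0:ℝ) ρ, g x = 0 := by
    intro x hx
    have hcont : ContinuousOn g (Icc 0 x) := fun y hy =>
      ((hg y (hsub x hx hy)).continuousAt).continuousWithinAt
    have hder : ∀ y ∈ Ico (0:ℝ) x, HasDerivWithinAt g 0 (Ici y) y := fun y hy =>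
      (hg y (hsub x hx ⟨hy.1, le_of_lt hy.2⟩)).hasDerivWithinAt
    have := constant_of_has_deriv_right_zero hcont hder x (right_mem_Icc.2 hx.1)
    rw [this, hg0]
  -- hence the first integral: (w')² (1+w²)^{-5/2} = 2 C w on [0,ρ)
  have hkey : ∀ x ∈ Ico (0:ℝ) ρ,
      (deriv w x) ^ 2 * (1 + (w x) ^ 2) ^ (-(5:ℝ)/2) = 2*C*(w x) := by
    intro x hx
    have := hgzero x hx
    simp only [hgdef] at this
    linarith
  -- w is nonnegative on [0, ρ)
  have hwnn : ∀ x ∈ Ico (0:ℝ) ρ, 0 ≤ w x := by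
    intro x hx
    have h := hkey x hx
    nlinarith [sq_nonneg (deriv w x), Real.rpow_pos_of_pos (hA x) (-(5:ℝ)/2)]
  -- w'' > 0 on [0, ρ)
  have hw'' : ∀ x ∈ Ico (0:ℝ) ρ, 0 < deriv (deriv w) x := by
    intro x hx
    have hxS : x ∈ Ioo (-ρ) ρ := ⟨by linarith [hρ, hx.1], hx.2⟩
    have h := hode x hxS
    nlinarith [Real.rpow_pos_of_pos (hA x) ((7:ℝ)/2), hA x, sq_nonneg (deriv w x),
      hwnn x hx, mul_nonneg (hwnn x hx) (sq_nonneg (deriv w x))]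
  -- w' > 0 on (0, ρ)
  have hw'pos : ∀ x ∈ Ioo (0:ℝ) ρ, 0 < deriv w x := by
    intro x hx
    have hmono : StrictMonoOn (deriv w) (Icc 0 x) := by
      apply strictMonoOn_of_deriv_pos (convex_Icc 0 x)
      · intro y hy
        exact ((hd2 y (hsub x ⟨le_of_lt hx.1, hx.2⟩ hy)).continuousAt).continuousWithinAt
      · intro y hy
        rw [interior_Icc] at hy
        exact hw'' y ⟨le_of_lt hy.1, lt_trans hy.2 hx.2⟩
    have := hmono (left_mem_Icc.2 (le_of_lt hx.1)) (right_mem_Icc.2 (le_of_lt hx.1)) hx.1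
    rwa [hw'0] at this
  -- Part 1
  have part1 : ∀ x ∈ Ioo 0 ρ, 0 < w x →
      H x = Real.sqrt (2 * C) / (1 + 1 / (w x) ^ 2) ^ ((1 : ℝ) / 4) := by
    intro x hx hwx
    set a := w x with ha
    set d := deriv w x with hd
    set A := 1 + a ^ 2 with hAdef
    have hApos : (0:ℝ) < A := hA x
    have hdpos : 0 < d := hw'pos x hx
    have hk := hkey x ⟨le_of_lt hx.1, hx.2⟩
    -- key : d^2 = 2 C a A^{5/2}
    have hcancel : A ^ (-(5:ℝ)/2) * A ^ ((5:ℝ)/2) = 1 := by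
      rw [← Real.rpow_add hApos]; norm_num
    have key : d ^ 2 = 2*C*a * A ^ ((5:ℝ)/2) := by
      have := congrArg (fun t => t * A ^ ((5:ℝ)/2)) hk
      rw [mul_assoc, hcancel, mul_one] at this
      linarith
    set s := A ^ ((1:ℝ)/2) with hs
    have hspos : 0 < s := Real.rpow_pos_of_pos hApos _
    have hs2 : s ^ 2 = A := by
      rw [hs, ← Real.rpow_natCast (A ^ ((1:ℝ)/2)) 2, ← Real.rpow_mul (le_of_lt hApos)]
      norm_num
    have hs3 : A ^ ((3:ℝ)/2) = s ^ 3 := by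
      rw [hs, ← Real.rpow_natCast (A ^ ((1:ℝ)/2)) 3, ← Real.rpow_mul (le_of_lt hApos)]
      norm_num
    have hs5 : A ^ ((5:ℝ)/2) = s ^ 5 := by
      rw [hs, ← Real.rpow_natCast (A ^ ((1:ℝ)/2)) 5, ← Real.rpow_mul (le_of_lt hApos)]
      norm_num
    -- B := 1 + 1/a², then (B^{1/4})² = s/a
    set B := 1 + 1 / a ^ 2 with hB
    have hBpos : (0:ℝ) < B := by positivity
    have hBA : B = A / a ^ 2 := by
      rw [hB, hAdef]; field_simp; ring
    have hB2 : (B ^ ((1:ℝ)/4)) ^ 2 = s / a := by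
      rw [← Real.rpow_natCast (B ^ ((1:ℝ)/4)) 2, ← Real.rpow_mul (le_of_lt hBpos)]
      norm_num
      rw [hBA, Real.div_rpow (le_of_lt hApos) (by positivity), ← hs,
        ← Real.rpow_natCast a 2, ← Real.rpow_mul (le_of_lt hwx)]
      norm_num
    have hB4pos : (0:ℝ) < B ^ ((1:ℝ)/4) := Real.rpow_pos_of_pos hBpos _
    have hHx : H x = d / A ^ ((3:ℝ)/2) := hH x
    have hL : 0 ≤ H x := by
      rw [hHx]
      exact le_of_lt (div_pos hdpos (Real.rpow_pos_of_pos hApos _))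
    have hR : 0 ≤ Real.sqrt (2*C) / B ^ ((1:ℝ)/4) := by positivity
    have hsqC : Real.sqrt (2*C) ^ 2 = 2*C := Real.sq_sqrt (by linarith)
    have hane : a ≠ 0 := ne_of_gt hwx
    have hsne : s ≠ 0 := ne_of_gt hspos
    have hsqeq : (H x) ^ 2 = (Real.sqrt (2*C) / B ^ ((1:ℝ)/4)) ^ 2 := by
      rw [hHx, div_pow, div_pow, hsqC, hB2, hs3, key, hs5]
      rw [div_eq_div_iff (by positivity) (by positivity)]
      field_simp
    exact (sq_eq_sq₀ hL hR).mp hsqeq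
  refine ⟨part1, ?_⟩
  -- Part 2
  intro ε hε
  refine ⟨max 1 (Real.sqrt (2*C) / ε), fun x hx hMx => ?_⟩
  set Q := Real.sqrt (2*C) with hQ
  have hQpos : 0 < Q := Real.sqrt_pos.2 (by linarith)
  have ha1 : (1:ℝ) ≤ w x := le_of_lt (lt_of_le_of_lt (le_max_left _ _) hMx)
  have hwx : 0 < w x := by linarith
  have haQ : Q / ε < w x := lt_of_le_of_lt (le_max_right _ _) hMx
  have hQlt : Q < ε * w x := by
    rw [div_lt_iff₀ hε] at haQ; linarith
  rw [part1 x hx hwx]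
  set B := 1 + 1 / (w x) ^ 2 with hB
  have ht0 : 0 < 1 / (w x) ^ 2 := by positivity
  have hB1 : (1:ℝ) ≤ B := by rw [hB]; linarith
  set D := B ^ ((1:ℝ)/4) with hD
  have hD1 : (1:ℝ) ≤ D := Real.one_le_rpow hB1 (by norm_num)
  have hane : w x ≠ 0 := ne_of_gt hwx
  have hDpos : (0:ℝ) < D := by linarith
  have hDle : D ≤ B := by
    calc D = B ^ ((1:ℝ)/4) := rfl
    _ ≤ B ^ (1:ℝ) := Real.rpow_le_rpow_of_exponent_le hB1 (by norm_num)
    _ = B := Real.rpow_one B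
  -- |Q/D - Q| = Q - Q/D ≤ Q * (1/w²) ≤ Q / w < ε
  have hQD_le : Q / D ≤ Q := by
    rw [div_le_iff₀ hDpos]
    nlinarith
  have hlow : Q / B ≤ Q / D := div_le_div_of_nonneg_left (le_of_lt hQpos) hDpos hDle
  have hBne : B ≠ 0 := by positivity
  have hQB : Q - Q / B = Q * (1 / (w x) ^ 2) / B := by
    rw [eq_div_iff hBne, sub_mul, div_mul_cancel₀ _ hBne, hB]
    field_simp
    ring
  have h3 : Q * (1 / (w x) ^ 2) / B ≤ Q * (1 / (w x) ^ 2) :=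
    div_le_self (by positivity) hB1
  have h4 : Q * (1 / (w x) ^ 2) < ε := by
    rw [mul_one_div, div_lt_iff₀ (by positivity)]
    nlinarith
  rw [abs_sub_comm, abs_of_nonneg (by linarith)]
  linarith
end

section
/- Let w solve w''(1+w²) - (5/2)w(w')² = C(1+w²)^{7/2} with C > 0, w(0)=0, w'(0)=0. Then along the graph, |∇_Σ H|²(x) = C²/(1+w(x)²), where |∇_Σ H|² = (1+w²)^{-1}((w''(1+w²) - 3(w')²w)/(1+w²)^{5/2})². In particular |∇_Σ H|² tends to 0 as w(x) → +∞. -/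
open Set

/-- Let `w` solve `w''(1+w²) - (5/2)w(w')² = C(1+w²)^{7/2}` with `C > 0`,
`w(0)=0`, `w'(0)=0`. Then along the graph,
`|∇_Σ H|²(x) = (1+w²)⁻¹((w''(1+w²) - 3(w')²w)/(1+w²)^{5/2})² = C²/(1+w(x)²)`.
In particular `|∇_Σ H|²` tends to `0` as `w(x) → +∞`. -/
theorem stmt6 (I : Set ℝ) (hI : IsOpen I) (hI' : Convex ℝ I) (h0 : (0 : ℝ) ∈ I)
    (w GradHsq : ℝ → ℝ) (C : ℝ) (hC : 0 < C) (hw : ContDiffOn ℝ 2 w I)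
    (hode : ∀ x ∈ I, deriv (deriv w) x * (1 + (w x) ^ 2)
      - (5 / 2) * w x * (deriv w x) ^ 2 = C * (1 + (w x) ^ 2) ^ ((7 : ℝ) / 2))
    (hw0 : w 0 = 0) (hw'0 : deriv w 0 = 0)
    (hGrad : ∀ x, GradHsq x = (1 + (w x) ^ 2)⁻¹ *
      ((deriv (deriv w) x * (1 + (w x) ^ 2) - 3 * (deriv w x) ^ 2 * w x)
        / (1 + (w x) ^ 2) ^ ((5 : ℝ) / 2)) ^ 2) :
    (∀ x ∈ I, GradHsq x = C ^ 2 / (1 + (w x) ^ 2))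
    ∧ ∀ ε > 0, ∃ M : ℝ, ∀ x ∈ I, M < w x → |GradHsq x| < ε := by
  have hu : ∀ x : ℝ, (0:ℝ) < 1 + (w x) ^ 2 := fun x => by positivity
  -- differentiability facts
  have hw1 : DifferentiableOn ℝ w I := hw.differentiableOn (by norm_num)
  have hw2 : DifferentiableOn ℝ (deriv w) I := by
    have h : ContDiffOn ℝ 1 (deriv w) I := hw.deriv_of_isOpen hI (by norm_num)
    exact h.differentiableOn (by norm_num)
  have hwd : ∀ x ∈ I, HasDerivAt w (deriv w x) x := fun x hx =>
    ((hw1 x hx).differentiableAt (hI.mem_nhds hx)).hasDerivAt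
  have hwdd : ∀ x ∈ I, HasDerivAt (deriv w) (deriv (deriv w) x) x := fun x hx =>
    ((hw2 x hx).differentiableAt (hI.mem_nhds hx)).hasDerivAt
  -- the first integral g
  set g : ℝ → ℝ := fun x =>
    (deriv w x) ^ 2 * (1 + (w x) ^ 2) ^ (-(7:ℝ)/2 + 1) - 2 * C * w x with hg
  have hgderiv : ∀ x ∈ I, HasDerivAt g 0 x := by
    intro x hx
    have h1 := hwd x hx
    have h2 := hwdd x hx
    have hu' : HasDerivAt (fun y => 1 + (w y) ^ 2) (2 * w x ^ 1 * deriv w x) x := by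
      simpa using ((h1.pow 2).const_add 1)
    have hr : HasDerivAt (fun y => (1 + (w y) ^ 2) ^ (-(7:ℝ)/2 + 1))
        ((2 * w x ^ 1 * deriv w x) * (-(7:ℝ)/2 + 1) *
          (1 + (w x) ^ 2) ^ ((-(7:ℝ)/2 + 1) - 1)) x :=
      hu'.rpow_const (Or.inl (ne_of_gt (hu x)))
    have hD : HasDerivAt g
        ((2 * deriv w x ^ 1 * deriv (deriv w) x) * (1 + (w x) ^ 2) ^ (-(7:ℝ)/2 + 1)
          + (deriv w x) ^ 2 * ((2 * w x ^ 1 * deriv w x) * (-(7:ℝ)/2 + 1) *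
              (1 + (w x) ^ 2) ^ ((-(7:ℝ)/2 + 1) - 1))
          - 2 * C * deriv w x) x := by
      have hD' := ((h2.pow 2).mul hr).sub ((h1.const_mul (2*C)))
      simp at hD'
      simpa using hD'.congr_of_eventuallyEq (Filter.Eventually.of_forall fun y => by simp [hg])
    convert hD using 1
    have hox := hode x hx
    have e1 : ((-(7:ℝ)/2 + 1) - 1 : ℝ) = -(7:ℝ)/2 := by ring
    have e2 : (1 + (w x) ^ 2) ^ (-(7:ℝ)/2 + 1)
        = (1 + (w x) ^ 2) ^ (-(7:ℝ)/2) * (1 + (w x) ^ 2) := by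
      rw [Real.rpow_add (hu x), Real.rpow_one]
    have e3 : (1 + (w x) ^ 2) ^ (-(7:ℝ)/2) * (1 + (w x) ^ 2) ^ ((7:ℝ)/2) = 1 := by
      rw [← Real.rpow_add (hu x)]; norm_num
    rw [e1, e2]
    linear_combination (-(2 * deriv w x * (1 + (w x) ^ 2) ^ (-(7:ℝ)/2))) * hox
      - (2 * C * deriv w x) * e3
  -- g is constant on I, and g 0 = 0
  have hgconst : ∀ x ∈ I, g x = 0 := by
    intro x hx
    have := hI'.norm_image_sub_le_of_norm_hasDerivWithin_le
      (f := g) (f' := fun _ => (0:ℝ)) (C := (0:ℝ))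
      (fun y hy => (hgderiv y hy).hasDerivWithinAt)
      (fun y _ => by simp) h0 hx
    have hg0 : g 0 = 0 := by simp [hg, hw0, hw'0]
    simp only [hg0, sub_zero, zero_mul] at this
    exact norm_le_zero_iff.mp this
  -- first integral identity: (w')² = 2 C w (1+w²)^{5/2}
  have hfi : ∀ x ∈ I, (deriv w x) ^ 2 = 2 * C * w x * (1 + (w x) ^ 2) ^ ((5:ℝ)/2) := by
    intro x hx
    have h := hgconst x hx
    have e2 : (1 + (w x) ^ 2) ^ (-(7:ℝ)/2 + 1) * (1 + (w x) ^ 2) ^ ((5:ℝ)/2) = 1 := by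
      rw [← Real.rpow_add (hu x)]; norm_num
    have h' : g x * (1 + (w x) ^ 2) ^ ((5:ℝ)/2) = 0 := by rw [h]; ring
    simp only [hg] at h' e2 ⊢
    nlinarith [h', e2, Real.rpow_natCast (1 + (w x)^2) 1]
  -- main identity
  have hmain : ∀ x ∈ I, GradHsq x = C ^ 2 / (1 + (w x) ^ 2) := by
    intro x hx
    have hox := hode x hx
    have hfx := hfi x hx
    have e4 : (1 + (w x) ^ 2) ^ ((7:ℝ)/2)
        = (1 + (w x) ^ 2) ^ ((5:ℝ)/2) * (1 + (w x) ^ 2) := by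
      rw [show ((7:ℝ)/2) = (5:ℝ)/2 + 1 by norm_num, Real.rpow_add (hu x), Real.rpow_one]
    have hnum : deriv (deriv w) x * (1 + (w x) ^ 2) - 3 * (deriv w x) ^ 2 * w x
        = C * (1 + (w x) ^ 2) ^ ((5:ℝ)/2) := by
      have : deriv (deriv w) x * (1 + (w x) ^ 2)
          = C * (1 + (w x) ^ 2) ^ ((7:ℝ)/2) + (5/2) * w x * (deriv w x) ^ 2 := by
        linarith [hox]
      rw [this, e4, hfx]; ring
    have h5 : (0:ℝ) < (1 + (w x) ^ 2) ^ ((5:ℝ)/2) := Real.rpow_pos_of_pos (hu x) _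
    rw [hGrad x, hnum, mul_div_assoc, div_self (ne_of_gt h5)]
    rw [mul_one, div_eq_inv_mul]
  refine ⟨hmain, ?_⟩
  intro ε hε
  refine ⟨max 1 (C^2/ε), fun x hx hM => ?_⟩
  rw [hmain x hx]
  have h1 : (1:ℝ) < w x := lt_of_le_of_lt (le_max_left _ _) hM
  have h2 : C^2/ε < w x := lt_of_le_of_lt (le_max_right _ _) hM
  have habs : |C ^ 2 / (1 + (w x) ^ 2)| = C ^ 2 / (1 + (w x) ^ 2) := by
    rw [abs_of_nonneg]; positivity
  rw [habs, div_lt_iff₀ (hu x)]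
  have : C^2 < ε * w x := by
    rw [div_lt_iff₀ hε] at h2; linarith [mul_comm ε (w x)]
  nlinarith
end

section
/- The cone over γ ⊂ S² is Willmore, i.e., H(r,s) = 𝓗(s)/r satisfies Δ_𝒞 H + (1/2)H³ − 2HK = 0 with K ≡ 0 (where Δ_𝒞 in the cone coordinates is (1/r)[∂_r(r∂_r ·) + ∂_s((1/r)∂_s ·)]), if and only if 𝓗 satisfies the ODE 𝓗''(s) = −𝓗(s)(1 + (1/2)𝓗(s)²). -/
open Set

/-- The cone over `γ ⊂ S²` is Willmore, i.e. `H(r,s) = 𝓗(s)/r` satisfies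
`Δ_𝒞 H + (1/2)H³ − 2HK = 0` with `K ≡ 0`, where in cone coordinates
`Δ_𝒞 φ = (1/r)[∂_r(r ∂_r φ) + ∂_s((1/r) ∂_s φ)]`, if and only if `𝓗` satisfies the ODE
`𝓗''(s) = −𝓗(s)(1 + (1/2)𝓗(s)²)`. -/
theorem stmt9 (𝓗 : ℝ → ℝ) (h𝓗 : ContDiff ℝ 2 𝓗)
    (H K LapH : ℝ → ℝ → ℝ)
    (hH : ∀ r s, H r s = 𝓗 s / r)
    (hK : ∀ r s, K r s = 0)
    (hLap : ∀ r s, LapH r s = (1 / r) *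
      (deriv (fun t => t * deriv (fun t' => H t' s) t) r
        + deriv (fun σ => (1 / r) * deriv (fun σ' => H r σ') σ) s)) :
    (∀ r ∈ Ioi (0 : ℝ), ∀ s : ℝ,
        LapH r s + (1 / 2) * (H r s) ^ 3 - 2 * H r s * K r s = 0)
    ↔ (∀ s : ℝ, deriv (deriv 𝓗) s = -𝓗 s * (1 + (1 / 2) * (𝓗 s) ^ 2)) := by
  -- closed form for LapH
  have key : ∀ r s : ℝ, LapH r s =
      (1 / r) * (𝓗 s * (r ^ 2)⁻¹ + 1 / r * (deriv (deriv 𝓗) s / r)) := by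
    intro r s
    rw [hLap]
    congr 1
    congr 1
    · -- radial term
      have hfun : (fun t => t * deriv (fun t' => H t' s) t) =
          fun t => 𝓗 s * -t⁻¹ := by
        funext t
        have : deriv (fun t' => H t' s) t = 𝓗 s * -(t ^ 2)⁻¹ := by
          simp only [hH, div_eq_mul_inv]
          rw [deriv_const_mul_field, deriv_inv]
        rw [this]
        rcases eq_or_ne t 0 with h | h
        · simp [h]
        · field_simp
      rw [hfun, deriv_const_mul_field]
      have : deriv (fun t : ℝ => -t⁻¹) r = (r ^ 2)⁻¹ := by
        rw [deriv.fun_neg, deriv_inv]; ring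
      rw [this]
    · -- angular term
      have hfun : (fun σ => (1 / r) * deriv (fun σ' => H r σ') σ) =
          fun σ => (1 / r) * (deriv 𝓗 σ / r) := by
        funext σ
        congr 1
        simp only [hH]
        exact deriv_div_const _
      rw [hfun, deriv_const_mul_field, deriv_div_const]
  constructor
  · intro h s
    have := h 1 (by norm_num) s
    rw [key, hH, hK] at this
    norm_num at this
    linarith
  · intro h r hr s
    have hr' : (r : ℝ) ≠ 0 := ne_of_gt hr
    rw [key, hH, hK, h s]
    field_simp
    ring
end

section
/- Let 𝓗_a solve 𝓗'' = −𝓗(1 + (1/2)𝓗²) with 𝓗_a(0) = a > 0, 𝓗_a'(0) = 0, and let c_a = inf{s > 0 : 𝓗_a(s) = 0}. Then 0 < c_a ≤ π/2. -/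
/-- Let `𝓗_a` solve `𝓗'' = −𝓗(1 + (1/2)𝓗²)` with `𝓗_a(0) = a > 0`,
`𝓗_a'(0) = 0`, and let `c_a = inf{s > 0 : 𝓗_a(s) = 0}`. Then `0 < c_a ≤ π/2`. -/
theorem stmt11 (a : ℝ) (ha : 0 < a) (𝓗 : ℝ → ℝ) (h𝓗 : ContDiff ℝ 2 𝓗)
    (hode : ∀ s : ℝ, deriv (deriv 𝓗) s = -𝓗 s * (1 + (1 / 2) * (𝓗 s) ^ 2))
    (h0 : 𝓗 0 = a) (h'0 : deriv 𝓗 0 = 0) :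
    0 < sInf {s : ℝ | 0 < s ∧ 𝓗 s = 0}
    ∧ sInf {s : ℝ | 0 < s ∧ 𝓗 s = 0} ≤ Real.pi / 2 := by
  have h2 : ContDiff ℝ (1+1) 𝓗 := by norm_num at h𝓗 ⊢; exact h𝓗
  obtain ⟨hdiff, -, hder1⟩ := contDiff_succ_iff_deriv.mp h2
  have hdiff' : Differentiable ℝ (deriv 𝓗) := hder1.differentiable one_ne_zero
  have hcont : Continuous 𝓗 := hdiff.continuous
  have hpi : (0:ℝ) < Real.pi / 2 := by positivity
  -- Wronskian with cos
  set W : ℝ → ℝ := fun s => deriv 𝓗 s * Real.cos s + 𝓗 s * Real.sin s with hW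
  have hWderiv : ∀ x : ℝ, HasDerivAt W (-Real.cos x * (𝓗 x)^3 / 2) x := by
    intro x
    have h1 : HasDerivAt 𝓗 (deriv 𝓗 x) x := (hdiff x).hasDerivAt
    have h2' : HasDerivAt (deriv 𝓗) (deriv (deriv 𝓗) x) x := (hdiff' x).hasDerivAt
    have hc : HasDerivAt Real.cos (-Real.sin x) x := Real.hasDerivAt_cos x
    have hs : HasDerivAt Real.sin (Real.cos x) x := Real.hasDerivAt_sin x
    have := (h2'.mul hc).add (h1.mul hs)
    refine this.congr_deriv ?_
    rw [hode x]; ring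
  have hWcont : Continuous W := by
    fun_prop
  -- existence of a zero in (0, π/2]
  have hzero : ∃ t, 0 < t ∧ t ≤ Real.pi / 2 ∧ 𝓗 t = 0 := by
    by_contra hno
    push_neg at hno
    -- then 𝓗 > 0 on [0, π/2]
    have hpos : ∀ t ∈ Set.Icc (0:ℝ) (Real.pi / 2), 0 < 𝓗 t := by
      rintro t ⟨ht0, htpi⟩
      rcases eq_or_lt_of_le ht0 with rfl | ht0'
      · rw [h0]; exact ha
      by_contra hle
      push_neg at hle
      have h0mem : (0:ℝ) ∈ Set.Icc (𝓗 t) (𝓗 0) := by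
        constructor
        · rcases eq_or_lt_of_le hle with h | h
          · exact absurd h (hno t ht0' htpi)
          · exact h.le
        · rw [h0]; exact ha.le
      obtain ⟨c, hc, hc0⟩ := intermediate_value_Icc' ht0 (hcont.continuousOn) h0mem
      have hcpos : 0 < c := by
        rcases eq_or_lt_of_le hc.1 with h | h
        · exfalso; rw [← h, h0] at hc0; linarith
        · exact h
      exact hno c hcpos (hc.2.trans htpi) hc0
    have hanti : StrictAntiOn W (Set.Icc 0 (Real.pi / 2)) := by
      apply strictAntiOn_of_deriv_neg (convex_Icc _ _) hWcont.continuousOn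
      intro x hx
      rw [interior_Icc] at hx
      rw [(hWderiv x).deriv]
      have hcos : 0 < Real.cos x :=
        Real.cos_pos_of_mem_Ioo ⟨by linarith [hx.1, Real.pi_pos], hx.2⟩
      have h𝓗x : 0 < 𝓗 x := hpos x ⟨hx.1.le, hx.2.le⟩
      have : 0 < Real.cos x * (𝓗 x)^3 / 2 := by positivity
      linarith
    have hlt := hanti (Set.left_mem_Icc.mpr hpi.le) (Set.right_mem_Icc.mpr hpi.le) hpi
    have hW0 : W 0 = 0 := by simp [hW, h'0, h0]
    have hWpi : W (Real.pi / 2) = 𝓗 (Real.pi / 2) := by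
      simp [hW, Real.cos_pi_div_two, Real.sin_pi_div_two]
    rw [hW0, hWpi] at hlt
    exact absurd hlt (not_lt.mpr (hpos _ (Set.right_mem_Icc.mpr hpi.le)).le)
  obtain ⟨t, ht0, htpi, htz⟩ := hzero
  have hne : {s : ℝ | 0 < s ∧ 𝓗 s = 0}.Nonempty := ⟨t, ht0, htz⟩
  -- lower bound from continuity at 0
  obtain ⟨δ, hδ, hball⟩ := Metric.continuousAt_iff.mp (hcont.continuousAt (x := 0))
    a (by linarith)
  have hlb : ∀ s ∈ {s : ℝ | 0 < s ∧ 𝓗 s = 0}, δ ≤ s := by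
    rintro s ⟨hs0, hsz⟩
    by_contra h
    push_neg at h
    have : dist s 0 < δ := by rw [Real.dist_eq, sub_zero, abs_of_pos hs0]; exact h
    have := hball this
    rw [hsz, h0, Real.dist_eq, zero_sub, abs_neg, abs_of_pos ha] at this
    exact lt_irrefl a this
  have hbdd : BddBelow {s : ℝ | 0 < s ∧ 𝓗 s = 0} := ⟨δ, hlb⟩
  constructor
  · exact lt_of_lt_of_le hδ (le_csInf hne hlb)
  · exact le_trans (csInf_le hbdd ⟨ht0, htz⟩) htpi
end

section
/- Let 𝓗_a solve 𝓗'' = −𝓗(1 + (1/2)𝓗²) with 𝓗_a(0) = a > 0, 𝓗_a'(0) = 0, and c_a its first positive zero. Then c_a → 0 as a → +∞. -/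
/-- If `f` has derivative `f'` everywhere and `f' ≤ 0` on `(x, y)`, then `f y ≤ f x`. -/
lemma decay' {f f' : ℝ → ℝ} {x y : ℝ} (hxy : x ≤ y)
    (hd : ∀ s, HasDerivAt f (f' s) s)
    (h' : ∀ s ∈ Set.Ioo x y, f' s ≤ 0) : f y ≤ f x := by
  have hdiff : Differentiable ℝ f := fun s => (hd s).differentiableAt
  have hmono : AntitoneOn f (Set.Icc x y) := by
    apply antitoneOn_of_deriv_nonpos (convex_Icc x y) hdiff.continuous.continuousOn
      (hdiff.differentiableOn.mono interior_subset)
    intro s hs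
    rw [interior_Icc] at hs
    rw [(hd s).deriv]
    exact h' s hs
  exact hmono (Set.left_mem_Icc.2 hxy) (Set.right_mem_Icc.2 hxy) hxy

/-- Let `𝓗_a` solve `𝓗'' = −𝓗(1 + (1/2)𝓗²)` with `𝓗_a(0) = a > 0`,
`𝓗_a'(0) = 0`, and `c_a` its first positive zero. Then `c_a → 0` as `a → +∞`. -/
theorem stmt13 :
    ∀ ε > (0 : ℝ), ∃ A : ℝ, ∀ a > A, ∀ 𝓗 : ℝ → ℝ, ContDiff ℝ 2 𝓗 →
      (∀ s : ℝ, deriv (deriv 𝓗) s = -𝓗 s * (1 + (1 / 2) * (𝓗 s) ^ 2)) →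
      𝓗 0 = a → deriv 𝓗 0 = 0 →
      sInf {s : ℝ | 0 < s ∧ 𝓗 s = 0} < ε := by
  intro ε hε
  refine ⟨max (13 / ε) 0, fun a ha g hg hode h0 h0' => ?_⟩
  have ha0 : 0 < a := lt_of_le_of_lt (le_max_right _ _) ha
  have haε : 13 / a < ε := by
    have h1 : 13 / ε < a := lt_of_le_of_lt (le_max_left _ _) ha
    rw [div_lt_iff₀ ha0]
    rw [div_lt_iff₀ hε] at h1
    linarith
  set T : ℝ := 13 / a with hTdef
  have hT0 : 0 < T := by positivity
  -- regularity
  have hgd : Differentiable ℝ g := hg.differentiable (by norm_num)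
  have hg2 : ContDiff ℝ ((1 : WithTop ℕ∞) + 1) g := by
    have : ((1 : WithTop ℕ∞) + 1) = 2 := by norm_num
    rwa [this]
  have hg'd : Differentiable ℝ (deriv g) := by
    rw [contDiff_succ_iff_deriv] at hg2
    exact hg2.2.2.differentiable (by norm_num)
  have hdg : ∀ s, HasDerivAt g (deriv g s) s := fun s => (hgd s).hasDerivAt
  have hdg' : ∀ s, HasDerivAt (deriv g) (-g s * (1 + 1 / 2 * g s ^ 2)) s := fun s => by
    have := (hg'd s).hasDerivAt
    rwa [hode s] at this
  -- main claim: there is a zero in (0, T]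
  have key : ∃ s ∈ Set.Ioc (0 : ℝ) T, g s = 0 := by
    by_contra hno
    push_neg at hno
    -- g is positive on [0, T]
    have gpos : ∀ s ∈ Set.Icc (0 : ℝ) T, 0 < g s := by
      intro s hs
      rcases eq_or_lt_of_le hs.1 with h | h
      · rw [← h, h0]; exact ha0
      by_contra hle
      push_neg at hle
      have hlt : g s < 0 := lt_of_le_of_ne hle (hno s ⟨h, hs.2⟩)
      have hIVT := intermediate_value_Icc' (le_of_lt h) hgd.continuous.continuousOn
        (show (0 : ℝ) ∈ Set.Icc (g s) (g 0) by rw [h0]; exact ⟨hlt.le, ha0.le⟩)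
      obtain ⟨z, hz, hgz⟩ := hIVT
      have hz0 : 0 < z := by
        rcases eq_or_lt_of_le hz.1 with h' | h'
        · exfalso; rw [← h', h0] at hgz; linarith
        · exact h'
      exact hno z ⟨hz0, le_trans hz.2 hs.2⟩ hgz
    -- second derivative is nonpositive on intervals inside [0,T]
    have hdd_nonpos : ∀ s ∈ Set.Icc (0 : ℝ) T, -g s * (1 + 1 / 2 * g s ^ 2) ≤ 0 := by
      intro s hs
      have := gpos s hs
      nlinarith [sq_nonneg (g s)]
    -- deriv g is antitone on [0, T]
    have derivg_le : ∀ x y : ℝ, 0 ≤ x → x ≤ y → y ≤ T → deriv g y ≤ deriv g x := by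
      intro x y hx hxy hyT
      exact decay' hxy hdg' fun v hv =>
        hdd_nonpos v ⟨le_trans hx hv.1.le, le_trans hv.2.le hyT⟩
    -- quadratic decay: if g > a/2 on (0, t), then g t ≤ a - a³t²/32
    have quad : ∀ t : ℝ, 0 ≤ t → t ≤ T → (∀ u ∈ Set.Ioo (0 : ℝ) t, a / 2 < g u) →
        g t ≤ a - a ^ 3 / 32 * t ^ 2 := by
      intro t ht htT hgt
      -- ψ u = deriv g u + a³/16 * u is ≤ 0 on [0, t]
      have hψd : ∀ s, HasDerivAt (fun u => deriv g u + a ^ 3 / 16 * u)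
          (-g s * (1 + 1 / 2 * g s ^ 2) + a ^ 3 / 16) s := by
        intro s
        have h2 : HasDerivAt (fun u : ℝ => a ^ 3 / 16 * u) (a ^ 3 / 16) s := by
          simpa using (hasDerivAt_id s).const_mul (a ^ 3 / 16)
        exact (hdg' s).add h2
      have hψle : ∀ u ∈ Set.Icc (0 : ℝ) t, deriv g u + a ^ 3 / 16 * u ≤ 0 := by
        intro u hu
        have := decay' hu.1 hψd (fun v hv => by
          have hv' : a / 2 < g v := hgt v ⟨hv.1, lt_of_lt_of_le hv.2 hu.2⟩
          have hcube : (a / 2) ^ 3 ≤ g v ^ 3 :=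
            pow_le_pow_left₀ (by positivity) hv'.le 3
          nlinarith)
        simpa [h0'] using this
      -- φ u = g u + a³/32 * u² is antitone on [0, t]
      have hφd : ∀ s, HasDerivAt (fun u => g u + a ^ 3 / 32 * u ^ 2)
          (deriv g s + a ^ 3 / 16 * s) s := by
        intro s
        have h2 : HasDerivAt (fun u : ℝ => a ^ 3 / 32 * u ^ 2) (a ^ 3 / 16 * s) s := by
          have := (hasDerivAt_pow 2 s).const_mul (a ^ 3 / 32)
          exact this.congr_deriv (by rw [show (2:ℕ) - 1 = 1 from rfl]; push_cast; ring)
        exact (hdg s).add h2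
      have := decay' ht hφd (fun v hv => hψle v ⟨hv.1.le, hv.2.le⟩)
      simp only [h0] at this
      nlinarith
    by_cases hS : ∃ t ∈ Set.Icc (0 : ℝ) T, g t ≤ a / 2
    · -- Case B: g drops to a/2 at first time t₁ ≤ 6/a, then falls fast to 0
      set S : Set ℝ := {t | t ∈ Set.Icc (0 : ℝ) T ∧ g t ≤ a / 2} with hSdef
      have hSclosed : IsClosed S :=
        (isClosed_Icc.inter (isClosed_le hgd.continuous continuous_const))
      have hSne : S.Nonempty := hS
      have hSbdd : BddBelow S := ⟨0, fun x hx => hx.1.1⟩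
      set t₁ : ℝ := sInf S with ht₁def
      have ht₁S : t₁ ∈ S := hSclosed.csInf_mem hSne hSbdd
      have ht₁0 : 0 < t₁ := by
        rcases eq_or_lt_of_le ht₁S.1.1 with h | h
        · exfalso; have := ht₁S.2; rw [← h, h0] at this; linarith
        · exact h
      have ht₁T : t₁ ≤ T := ht₁S.1.2
      have hbefore : ∀ u ∈ Set.Ioo (0 : ℝ) t₁, a / 2 < g u := by
        intro u hu
        by_contra hle
        push_neg at hle
        exact (notMem_of_lt_csInf hu.2 hSbdd) ⟨⟨hu.1.le, le_trans hu.2.le ht₁T⟩, hle⟩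
      have hq := quad t₁ ht₁0.le ht₁T hbefore
      have hgt₁pos : 0 < g t₁ := gpos t₁ ht₁S.1
      have hgt₁le : g t₁ ≤ a / 2 := ht₁S.2
      -- t₁ < 6/a, i.e. a * t₁ < 6
      have ht₁small : a * t₁ < 6 := by
        by_contra hcon
        push_neg at hcon
        have h36 : (36 : ℝ) ≤ (a * t₁) ^ 2 := by nlinarith
        have h1 : a * 36 ≤ a ^ 3 * t₁ ^ 2 := by
          rw [show a ^ 3 * t₁ ^ 2 = a * (a * t₁) ^ 2 by ring]
          exact mul_le_mul_of_nonneg_left h36 ha0.le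
        linarith
      -- MVT on [0, t₁]
      obtain ⟨c, hc, hcslope⟩ := exists_deriv_eq_slope g ht₁0
        hgd.continuous.continuousOn hgd.differentiableOn
      have hslope : deriv g c ≤ -(a / (2 * t₁)) := by
        rw [hcslope, h0, sub_zero, div_le_iff₀ ht₁0]
        have hx : -(a / (2 * t₁)) * t₁ = -(a / 2) := by field_simp
        rw [hx]
        linarith
      -- linear decay on [t₁, T]
      have hχd : ∀ s, HasDerivAt (fun u => g u + a / (2 * t₁) * u)
          (deriv g s + a / (2 * t₁)) s := by
        intro s
        have h2 : HasDerivAt (fun u : ℝ => a / (2 * t₁) * u) (a / (2 * t₁)) s := by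
          simpa using (hasDerivAt_id s).const_mul (a / (2 * t₁))
        exact (hdg s).add h2
      have hχ := decay' ht₁T hχd (fun v hv => by
        have h1 : deriv g v ≤ deriv g c :=
          derivg_le c v (le_of_lt hc.1) (le_of_lt (lt_trans hc.2 hv.1)) hv.2.le
        linarith [hslope])
      have hgTpos : 0 < g T := gpos T ⟨hT0.le, le_refl T⟩
      have haT : a * T = 13 := by rw [hTdef]; field_simp
      -- derive contradiction: g T ≤ g t₁ + a/(2t₁) * (t₁ - T) < 0
      have hfinal : g T + a / (2 * t₁) * T ≤ g t₁ + a / (2 * t₁) * t₁ := hχ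
      have h2t₁ : (0:ℝ) < 2 * t₁ := by linarith
      have hx : a / (2 * t₁) * t₁ = a / 2 := by field_simp
      have hy : a / (2 * t₁) * T = 13 / (2 * t₁) := by
        rw [div_mul_eq_mul_div, mul_comm a T, mul_comm T a, haT]
      have hz : a < 13 / (2 * t₁) := by
        rw [lt_div_iff₀ h2t₁]
        nlinarith
      rw [hx, hy] at hfinal
      linarith
    · -- Case A: g > a/2 on all of [0,T]: quadratic decay kills g before T
      push_neg at hS
      have hq := quad T hT0.le (le_refl T) (fun u hu => hS u ⟨hu.1.le, hu.2.le⟩)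
      have hgTpos : 0 < g T := gpos T ⟨hT0.le, le_refl T⟩
      have haT : a * T = 13 := by rw [hTdef]; field_simp
      have hh : a ^ 3 * T ^ 2 = 169 * a := by
        linear_combination (a * (a * T + 13)) * haT
      linarith
  obtain ⟨s, hs, hgs⟩ := key
  have hbdd : BddBelow {s : ℝ | 0 < s ∧ g s = 0} := ⟨0, fun x hx => hx.1.le⟩
  have hle : sInf {s : ℝ | 0 < s ∧ g s = 0} ≤ s := csInf_le hbdd ⟨hs.1, hgs⟩
  exact lt_of_le_of_lt hle (lt_of_le_of_lt hs.2 haε)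
end

section
/- Every solution 𝓗 of 𝓗'' = −𝓗(1 + (1/2)𝓗²) is bounded, defined on all of ℝ, and if nonconstant it is periodic. -/
set_option maxHeartbeats 1000000

open Set Metric Real Filter

/-- No bounded solution can have `y = x' > 0` on a ray `[c, ∞)`. -/
private lemma stmt15_noRay {x y : ℝ → ℝ}
    (hx : ∀ t, HasDerivAt x (y t) t)
    (hy : ∀ t, HasDerivAt y (-x t * (1 + 1 / 2 * x t ^ 2)) t)
    {M : ℝ} (hM : ∀ t, |x t| ≤ M) {c : ℝ} (hc : ∀ t, c ≤ t → 0 < y t) : False := by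
  have hdx : Differentiable ℝ x := fun t => (hx t).differentiableAt
  have hdy : Differentiable ℝ y := fun t => (hy t).differentiableAt
  have hdx' : ∀ t, deriv x t = y t := fun t => (hx t).deriv
  have hdy' : ∀ t, deriv y t = -x t * (1 + 1 / 2 * x t ^ 2) := fun t => (hy t).deriv
  have hmono : StrictMonoOn x (Ici c) := by
    apply strictMonoOn_of_deriv_pos (convex_Ici c) hdx.continuous.continuousOn
    intro t ht
    rw [interior_Ici] at ht
    rw [hdx']
    exact hc t ht.le
  have hbdd : BddAbove (x '' Ici c) := ⟨M, by rintro _ ⟨t, -, rfl⟩; exact (le_abs_self _).trans (hM t)⟩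
  by_cases hLpos : 0 < sSup (x '' Ici c)
  · obtain ⟨_, ⟨s₀, hs₀, rfl⟩, hz⟩ :=
      exists_lt_of_lt_csSup (⟨x c, c, self_mem_Ici, rfl⟩ : (x '' Ici c).Nonempty) hLpos
    have hge : ∀ s, s₀ ≤ s → x s₀ ≤ x s := by
      intro s hs
      rcases eq_or_lt_of_le hs with rfl | hlt
      · exact le_rfl
      · exact (hmono hs₀ (mem_Ici.mp (Set.mem_of_mem_of_subset hs₀ (Ici_subset_Ici.mpr le_rfl)) |>.trans'
          (le_refl _) |> fun _ => (le_trans hs₀ hs : c ≤ s)) hlt).le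
    have hkey : ∀ s ∈ interior (Ici s₀), deriv y s ≤ -(x s₀) := by
      intro s hsi
      rw [interior_Ici] at hsi
      have h1 := hge s hsi.le
      rw [hdy']
      nlinarith [sq_nonneg (x s)]
    have hineq := (convex_Ici s₀).image_sub_le_mul_sub_of_deriv_le
      hdy.continuous.continuousOn hdy.differentiableOn hkey
    have hys₀ : 0 < y s₀ := hc s₀ hs₀
    have hdpos : 0 < (y s₀ + 1) / x s₀ := by positivity
    have h2 : x s₀ * ((y s₀ + 1) / x s₀) = y s₀ + 1 := by field_simp
    have h3 := hineq s₀ self_mem_Ici (s₀ + (y s₀ + 1) / x s₀)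
      (by simp only [mem_Ici]; linarith) (by linarith)
    have h4 : 0 < y (s₀ + (y s₀ + 1) / x s₀) := hc _ (by linarith [mem_Ici.mp hs₀])
    nlinarith
  · have hLle : sSup (x '' Ici c) ≤ 0 := not_lt.mp hLpos
    have hxneg : ∀ s, c ≤ s → x s < 0 := by
      intro s hs
      have h1 : x s < x (s + 1) := hmono hs (by simp only [mem_Ici]; linarith) (by linarith)
      have h2 : x (s + 1) ≤ sSup (x '' Ici c) :=
        le_csSup hbdd ⟨s + 1, by simp only [mem_Ici]; linarith, rfl⟩
      linarith
    have hykey : ∀ s ∈ interior (Ici c), (0:ℝ) ≤ deriv y s := by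
      intro s hsi
      rw [interior_Ici] at hsi
      have := hxneg s hsi.le
      rw [hdy']
      nlinarith [sq_nonneg (x s)]
    have hyge := (convex_Ici c).mul_sub_le_image_sub_of_le_deriv
      hdy.continuous.continuousOn hdy.differentiableOn hykey
    have hxkey : ∀ s ∈ interior (Ici c), y c ≤ deriv x s := by
      intro s hsi
      rw [interior_Ici] at hsi
      have := hyge c self_mem_Ici s (mem_Ici.mpr hsi.le) hsi.le
      rw [hdx']
      linarith
    have hineq := (convex_Ici c).mul_sub_le_image_sub_of_le_deriv
      hdx.continuous.continuousOn hdx.differentiableOn hxkey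
    have hd : 0 < y c := hc c le_rfl
    have h0 : 0 ≤ M - x c := by linarith [(le_abs_self (x c)).trans (hM c), neg_abs_le (x c)]
    have hdpos : 0 < (M - x c + 1) / y c := by positivity
    have h2 : y c * ((M - x c + 1) / y c) = M - x c + 1 := by field_simp
    have h3 := hineq c self_mem_Ici (c + (M - x c + 1) / y c)
      (by simp only [mem_Ici]; linarith) (by linarith)
    have h4 := (le_abs_self (x (c + (M - x c + 1) / y c))).trans (hM _)
    nlinarith

/-- The derivative `y` has a zero in every ray. -/
private lemma stmt15_zero {x y : ℝ → ℝ}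
    (hx : ∀ t, HasDerivAt x (y t) t)
    (hy : ∀ t, HasDerivAt y (-x t * (1 + 1 / 2 * x t ^ 2)) t)
    {M : ℝ} (hM : ∀ t, |x t| ≤ M) (c : ℝ) : ∃ a, c ≤ a ∧ y a = 0 := by
  by_contra hcon
  push_neg at hcon
  have hdy : Differentiable ℝ y := fun t => (hy t).differentiableAt
  have hcont' : Continuous y := hdy.continuous
  rcases (hcon c le_rfl).lt_or_gt with hneg | hpos
  · -- y c < 0 : show y < 0 on the ray, contradict via -x, -y
    have hsign : ∀ t, c ≤ t → y t < 0 := by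
      intro t ht
      by_contra hge
      push_neg at hge
      obtain ⟨a, ha, hya⟩ := intermediate_value_Icc ht hcont'.continuousOn ⟨hneg.le, hge⟩
      exact hcon a ha.1 hya
    have hx' : ∀ t, HasDerivAt (fun t => -x t) (-y t) t := fun t => (hx t).neg
    have hy' : ∀ t, HasDerivAt (fun t => -y t)
        (-(-x t) * (1 + 1 / 2 * (-x t) ^ 2)) t := by
      intro t
      refine (hy t).neg.congr_deriv ?_
      ring
    have hM' : ∀ t, |(-x t)| ≤ M := fun t => by rw [abs_neg]; exact hM t
    exact stmt15_noRay hx' hy' hM' (fun t ht => by simpa using (hsign t ht))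
  · have hsign : ∀ t, c ≤ t → 0 < y t := by
      intro t ht
      by_contra hge
      push_neg at hge
      obtain ⟨a, ha, hya⟩ := intermediate_value_Icc' ht hcont'.continuousOn ⟨hge, hpos.le⟩
      exact hcon a ha.1 hya
    exact stmt15_noRay hx hy hM hsign

/-- Global uniqueness for a globally Lipschitz autonomous field. -/
private lemma stmt15_uniq {w : ℝ × ℝ → ℝ × ℝ} {K : NNReal} (hw : LipschitzWith K w)
    {u v : ℝ → ℝ × ℝ} (hu : ∀ t, HasDerivAt u (w (u t)) t)
    (hv : ∀ t, HasDerivAt v (w (v t)) t) {a : ℝ} (hav : u a = v a) (t : ℝ) : u t = v t := by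
  have h1 : a ∈ Ioo (a - (|t - a| + 1)) (a + (|t - a| + 1)) := by
    constructor <;> [skip; skip] <;> nlinarith [abs_nonneg (t - a)]
  have h2 : t ∈ Ioo (a - (|t - a| + 1)) (a + (|t - a| + 1)) := by
    have hle := le_abs_self (t - a)
    have hle' := neg_abs_le (t - a)
    constructor <;> [linarith; linarith]
  exact ODE_solution_unique_of_mem_Ioo (v := fun _ => w) (s := fun _ => univ)
    (fun _ _ => hw.lipschitzOnWith) h1
    (fun r _ => ⟨hu r, mem_univ _⟩) (fun r _ => ⟨hv r, mem_univ _⟩) hav h2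



/-- Every (local) solution of `𝓗'' = −𝓗(1 + (1/2)𝓗²)` is bounded, extends to a
solution defined on all of `ℝ`, and if nonconstant it is periodic. -/
theorem stmt15 (I : Set ℝ) (hI : IsOpen I) (hI' : Convex ℝ I)
    (t₀ : ℝ) (ht₀ : t₀ ∈ I)
    (h : ℝ → ℝ) (hh : ContDiffOn ℝ 2 h I)
    (hode : ∀ s ∈ I, deriv (deriv h) s = -h s * (1 + (1 / 2) * (h s) ^ 2)) :
    ∃ 𝓗 : ℝ → ℝ, ContDiff ℝ 2 𝓗
      ∧ (∀ s : ℝ, deriv (deriv 𝓗) s = -𝓗 s * (1 + (1 / 2) * (𝓗 s) ^ 2))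
      ∧ (∀ s ∈ I, 𝓗 s = h s)
      ∧ (∃ M : ℝ, ∀ s : ℝ, |𝓗 s| ≤ M)
      ∧ ((¬ ∃ c : ℝ, ∀ s : ℝ, 𝓗 s = c) → ∃ T > (0 : ℝ), Function.Periodic 𝓗 T) := by
    classical
  -- derivatives of h on I
  have hd1 : ∀ s ∈ I, HasDerivAt h (deriv h s) s := fun s hs =>
    ((hh.differentiableOn (by norm_num)).differentiableAt (hI.mem_nhds hs)).hasDerivAt
  have hderiv1 : ContDiffOn ℝ 1 (deriv h) I := hh.deriv_of_isOpen hI (by norm_num)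
  have hd2 : ∀ s ∈ I, HasDerivAt (deriv h) (deriv (deriv h) s) s := fun s hs =>
    ((hderiv1.differentiableOn (by norm_num)).differentiableAt (hI.mem_nhds hs)).hasDerivAt
  -- the conserved energy on I
  obtain ⟨E₀, hE₀def⟩ : ∃ E₀ : ℝ, E₀ = (h t₀) ^ 2 + 1 / 4 * (h t₀) ^ 4 + (deriv h t₀) ^ 2 :=
    ⟨_, rfl⟩
  have hE₀nonneg : 0 ≤ E₀ := by rw [hE₀def]; positivity
  have hψ₀' : ∀ s ∈ I,
      HasDerivAt (fun s => (h s) ^ 2 + 1 / 4 * (h s) ^ 4 + (deriv h s) ^ 2) 0 s := by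
    intro s hs
    have h1 := hd1 s hs
    have h2 := hd2 s hs
    have h3 := ((h1.pow 2).add ((h1.pow 4).const_mul (1 / 4))).add (h2.pow 2)
    refine HasDerivAt.congr_deriv h3 ?_
    rw [hode s hs]
    push_cast
    ring
  have hψ₀const : ∀ s ∈ I, (h s) ^ 2 + 1 / 4 * (h s) ^ 4 + (deriv h s) ^ 2 = E₀ := by
    have hcont : ContinuousOn (fun s => (h s) ^ 2 + 1 / 4 * (h s) ^ 4 + (deriv h s) ^ 2) I :=
      fun s hs => ((hψ₀' s hs).differentiableAt.continuousAt).continuousWithinAt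
    have hdiff : DifferentiableOn ℝ
        (fun s => (h s) ^ 2 + 1 / 4 * (h s) ^ 4 + (deriv h s) ^ 2) (interior I) := by
      rw [hI.interior_eq]
      exact fun s hs => ((hψ₀' s hs).differentiableAt).differentiableWithinAt
    have hle0 : ∀ s ∈ interior I,
        deriv (fun s => (h s) ^ 2 + 1 / 4 * (h s) ^ 4 + (deriv h s) ^ 2) s ≤ 0 := by
      intro s hsi
      rw [hI.interior_eq] at hsi
      rw [(hψ₀' s hsi).deriv]
    have hge0 : ∀ s ∈ interior I,
        (0:ℝ) ≤ deriv (fun s => (h s) ^ 2 + 1 / 4 * (h s) ^ 4 + (deriv h s) ^ 2) s := by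
      intro s hsi
      rw [hI.interior_eq] at hsi
      rw [(hψ₀' s hsi).deriv]
    have A := hI'.image_sub_le_mul_sub_of_deriv_le hcont hdiff hle0
    have B := hI'.mul_sub_le_image_sub_of_le_deriv hcont hdiff hge0
    intro s hs
    rcases le_total s t₀ with hst | hst
    · have a1 := A s hs t₀ ht₀ hst
      have a2 := B s hs t₀ ht₀ hst
      simp only [zero_mul] at a1 a2
      rw [hE₀def]; linarith
    · have a1 := A t₀ ht₀ s hs hst
      have a2 := B t₀ ht₀ s hs hst
      simp only [zero_mul] at a1 a2
      rw [hE₀def]; linarith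
  -- the cutoff bump function
  let cb : ContDiffBump (0 : ℝ × ℝ) :=
    ⟨Real.sqrt E₀ + 1, Real.sqrt E₀ + 2, by positivity, by linarith [Real.sqrt_nonneg E₀]⟩
  have hlev : ∀ p : ℝ × ℝ, p.1 ^ 2 + 1 / 4 * p.1 ^ 4 + p.2 ^ 2 ≤ E₀ → cb p = 1 := by
    intro p hp
    apply cb.one_of_mem_closedBall
    have h1 : p.1 ^ 2 ≤ E₀ := by nlinarith [sq_nonneg p.2, sq_nonneg (p.1 ^ 2)]
    have h2 : p.2 ^ 2 ≤ E₀ := by nlinarith [sq_nonneg p.1, sq_nonneg (p.1 ^ 2)]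
    have h1' : |p.1| ≤ Real.sqrt E₀ := by
      rw [← Real.sqrt_sq_eq_abs]; exact Real.sqrt_le_sqrt h1
    have h2' : |p.2| ≤ Real.sqrt E₀ := by
      rw [← Real.sqrt_sq_eq_abs]; exact Real.sqrt_le_sqrt h2
    rw [Metric.mem_closedBall, dist_zero_right, Prod.norm_def]
    show max ‖p.1‖ ‖p.2‖ ≤ Real.sqrt E₀ + 1
    rw [Real.norm_eq_abs, Real.norm_eq_abs]
    exact max_le (by linarith) (by linarith)
  -- the modified vector field
  set w : ℝ × ℝ → ℝ × ℝ :=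
    fun p => cb p • ((p.2, -p.1 * (1 + 1 / 2 * p.1 ^ 2)) : ℝ × ℝ) with hwdef
  have hfv : ContDiff ℝ 1 (fun p : ℝ × ℝ => ((p.2, -p.1 * (1 + 1 / 2 * p.1 ^ 2)) : ℝ × ℝ)) := by
    apply ContDiff.prodMk contDiff_snd
    exact (contDiff_fst.neg.mul (contDiff_const.add (contDiff_const.mul (contDiff_fst.pow 2))))
  have hw1 : ContDiff ℝ 1 w := cb.contDiff.smul hfv
  have hwsupp : HasCompactSupport w := by
    have h1 : HasCompactSupport (⇑cb) := cb.hasCompactSupport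
    exact h1.smul_right (f' := fun p : ℝ × ℝ => ((p.2, -p.1 * (1 + 1 / 2 * p.1 ^ 2)) : ℝ × ℝ))
  obtain ⟨K, hK⟩ : ∃ K : NNReal, LipschitzWith K w :=
    ContDiff.lipschitzWith_of_hasCompactSupport hwsupp hw1 one_ne_zero
  obtain ⟨C, hC⟩ := hwsupp.exists_bound_of_continuous hw1.continuous
  have hC0 : 0 ≤ C := le_trans (norm_nonneg _) (hC 0)
  -- solutions on arbitrarily long intervals
  obtain ⟨p₀, hp₀def⟩ : ∃ p₀ : ℝ × ℝ, p₀ = (h t₀, deriv h t₀) := ⟨_, rfl⟩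
  have hsol : ∀ n : ℕ, ∃ α : ℝ → ℝ × ℝ, α t₀ = p₀ ∧
      ∀ t ∈ Ioo (t₀ - ((n : ℝ) + 1)) (t₀ + ((n : ℝ) + 1)), HasDerivAt α (w (α t)) t := by
    intro n
    have hn1 : (0:ℝ) < (n : ℝ) + 1 := by positivity
    have hpl : IsPicardLindelof (fun _ => w)
        (⟨t₀, ⟨by linarith, by linarith⟩⟩ : Icc (t₀ - ((n:ℝ)+1)) (t₀ + ((n:ℝ)+1))) p₀
        ⟨C * ((n:ℝ)+1), by positivity⟩ 0 ⟨C, hC0⟩ K := by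
      apply IsPicardLindelof.of_time_independent
      · exact fun p _ => hC p
      · exact hK.lipschitzOnWith
      · have heq : max ((t₀ + ((n:ℝ)+1)) - t₀) (t₀ - (t₀ - ((n:ℝ)+1))) = (n:ℝ) + 1 := by
          rw [add_sub_cancel_left, sub_sub_cancel, max_self]
        simp only [heq, NNReal.coe_zero, sub_zero]
        exact le_refl (C * ((n:ℝ)+1))
    obtain ⟨α, hα0, hα⟩ := hpl.exists_eq_forall_mem_Icc_hasDerivWithinAt₀
    exact ⟨α, hα0, fun t ht =>
      (hα t (Ioo_subset_Icc_self ht)).hasDerivAt (Icc_mem_nhds ht.1 ht.2)⟩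
  choose α hα0 hα using hsol
  -- glue into a global solution
  have hmem : ∀ t : ℝ, t ∈ Ioo (t₀ - ((⌊|t - t₀|⌋₊ : ℝ) + 1)) (t₀ + ((⌊|t - t₀|⌋₊ : ℝ) + 1)) := by
    intro t
    have h1 : |t - t₀| < (⌊|t - t₀|⌋₊ : ℝ) + 1 := Nat.lt_floor_add_one _
    have h2 := abs_lt.mp h1
    exact ⟨by linarith [h2.1], by linarith [h2.2]⟩
  have hglue : ∀ m n : ℕ, ∀ s : ℝ, s ∈ Ioo (t₀ - ((m:ℝ)+1)) (t₀ + ((m:ℝ)+1)) →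
      s ∈ Ioo (t₀ - ((n:ℝ)+1)) (t₀ + ((n:ℝ)+1)) → α m s = α n s := by
    have key : ∀ m n : ℕ, m ≤ n → ∀ s : ℝ, s ∈ Ioo (t₀ - ((m:ℝ)+1)) (t₀ + ((m:ℝ)+1)) →
        α m s = α n s := by
      intro m n hmn s hsm
      have hcast : (m:ℝ) ≤ (n:ℝ) := Nat.cast_le.mpr hmn
      have hsub : Ioo (t₀ - ((m:ℝ)+1)) (t₀ + ((m:ℝ)+1)) ⊆ Ioo (t₀ - ((n:ℝ)+1)) (t₀ + ((n:ℝ)+1)) :=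
        Ioo_subset_Ioo (by linarith) (by linarith)
      have ht₀m : t₀ ∈ Ioo (t₀ - ((m:ℝ)+1)) (t₀ + ((m:ℝ)+1)) := by
        have : (0:ℝ) ≤ (m:ℝ) := Nat.cast_nonneg m
        exact ⟨by linarith, by linarith⟩
      exact ODE_solution_unique_of_mem_Ioo (v := fun _ => w) (s := fun _ => univ)
        (fun _ _ => hK.lipschitzOnWith) ht₀m
        (fun r hr => ⟨hα m r hr, mem_univ _⟩)
        (fun r hr => ⟨hα n r (hsub hr), mem_univ _⟩)
        ((hα0 m).trans (hα0 n).symm) hsm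
    intro m n s hsm hsn
    rcases le_total m n with hmn | hmn
    · exact key m n hmn s hsm
    · exact (key n m hmn s hsn).symm
  obtain ⟨γ, hγdef⟩ : ∃ γ : ℝ → ℝ × ℝ, γ = fun t => α ⌊|t - t₀|⌋₊ t := ⟨_, rfl⟩
  have hγeq : ∀ n : ℕ, ∀ s ∈ Ioo (t₀ - ((n:ℝ)+1)) (t₀ + ((n:ℝ)+1)), γ s = α n s := by
    intro n s hs
    rw [hγdef]
    exact hglue _ n s (hmem s) hs
  have hγ0 : γ t₀ = p₀ := by rw [hγdef]; exact hα0 _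
  have hγw : ∀ t, HasDerivAt γ (w (γ t)) t := by
    intro t
    have hev : γ =ᶠ[nhds t] α ⌊|t - t₀|⌋₊ := by
      filter_upwards [isOpen_Ioo.mem_nhds (hmem t)] with s hs
      exact hγeq _ s hs
    rw [hγeq _ t (hmem t)]
    exact (hα _ t (hmem t)).congr_of_eventuallyEq hev
  -- the components of γ
  obtain ⟨x, hxdef⟩ : ∃ x : ℝ → ℝ, x = fun t => (γ t).1 := ⟨_, rfl⟩
  obtain ⟨y, hydef⟩ : ∃ y : ℝ → ℝ, y = fun t => (γ t).2 := ⟨_, rfl⟩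
  have hx2 : ∀ t, HasDerivAt x (cb (γ t) * y t) t := by
    intro t
    have h1 : HasDerivAt (fun t => (γ t).1) ((w (γ t)).1) t :=
      (ContinuousLinearMap.fst ℝ ℝ ℝ).hasFDerivAt.comp_hasDerivAt t (hγw t)
    rw [hxdef, hydef]
    exact h1
  have hy2 : ∀ t, HasDerivAt y (cb (γ t) * (-x t * (1 + 1 / 2 * x t ^ 2))) t := by
    intro t
    have h1 : HasDerivAt (fun t => (γ t).2) ((w (γ t)).2) t :=
      (ContinuousLinearMap.snd ℝ ℝ ℝ).hasFDerivAt.comp_hasDerivAt t (hγw t)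
    rw [hxdef, hydef]
    exact h1
  -- energy conservation along γ
  have hψ' : ∀ t, HasDerivAt (fun t => x t ^ 2 + 1 / 4 * x t ^ 4 + y t ^ 2) 0 t := by
    intro t
    have h1 := hx2 t
    have h2 := hy2 t
    have h3 := ((h1.pow 2).add ((h1.pow 4).const_mul (1 / 4))).add (h2.pow 2)
    refine HasDerivAt.congr_deriv h3 ?_
    push_cast
    ring
  have hψconst : ∀ t, x t ^ 2 + 1 / 4 * x t ^ 4 + y t ^ 2 = E₀ := by
    intro t
    have hconst := is_const_of_deriv_eq_zero (f := fun t => x t ^ 2 + 1 / 4 * x t ^ 4 + y t ^ 2)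
      (fun r => (hψ' r).differentiableAt) (fun r => (hψ' r).deriv) t t₀
    have ht₀val : x t₀ = h t₀ ∧ y t₀ = deriv h t₀ := by
      rw [hxdef, hydef]
      constructor <;> simp [hγ0, hp₀def]
    rw [hE₀def]
    rw [hconst, ht₀val.1, ht₀val.2]
  have hbump1 : ∀ t, cb (γ t) = 1 := by
    intro t
    apply hlev
    have := hψconst t
    rw [hxdef, hydef] at this
    simp only at this
    linarith [le_of_eq this]
  have hxy : ∀ t, HasDerivAt x (y t) t := by
    intro t
    have := hx2 t
    rwa [hbump1 t, one_mul] at this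
  have hyx : ∀ t, HasDerivAt y (-x t * (1 + 1 / 2 * x t ^ 2)) t := by
    intro t
    have := hy2 t
    rwa [hbump1 t, one_mul] at this
  -- γ agrees with (h, h') on I
  have hgI : ∀ s ∈ I, γ s = (h s, deriv h s) := by
    intro s hs
    have hu : min s t₀ ∈ I := by
      rcases min_choice s t₀ with hmc | hmc <;> rw [hmc] <;> assumption
    have hv : max s t₀ ∈ I := by
      rcases max_choice s t₀ with hmc | hmc <;> rw [hmc] <;> assumption
    obtain ⟨ε₁, hε₁, hb1⟩ := Metric.isOpen_iff.mp hI (min s t₀) hu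
    obtain ⟨ε₂, hε₂, hb2⟩ := Metric.isOpen_iff.mp hI (max s t₀) hv
    have hδ : 0 < min ε₁ ε₂ / 2 := by positivity
    have hu' : min s t₀ - min ε₁ ε₂ / 2 ∈ I := by
      apply hb1
      rw [mem_ball, Real.dist_eq, show min s t₀ - min ε₁ ε₂ / 2 - min s t₀ = -(min ε₁ ε₂ / 2) by
        ring, abs_neg, abs_of_pos hδ]
      have := min_le_left ε₁ ε₂
      linarith
    have hv' : max s t₀ + min ε₁ ε₂ / 2 ∈ I := by
      apply hb2
      rw [mem_ball, Real.dist_eq, show max s t₀ + min ε₁ ε₂ / 2 - max s t₀ = min ε₁ ε₂ / 2 by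
        ring, abs_of_pos hδ]
      have := min_le_right ε₁ ε₂
      linarith
    have hIoo : ∀ r ∈ Ioo (min s t₀ - min ε₁ ε₂ / 2) (max s t₀ + min ε₁ ε₂ / 2), r ∈ I :=
      fun r hr => hI'.ordConnected.out hu' hv' ⟨hr.1.le, hr.2.le⟩
    have hsmem : s ∈ Ioo (min s t₀ - min ε₁ ε₂ / 2) (max s t₀ + min ε₁ ε₂ / 2) :=
      ⟨by linarith [min_le_left s t₀], by linarith [le_max_left s t₀]⟩
    have ht₀mem : t₀ ∈ Ioo (min s t₀ - min ε₁ ε₂ / 2) (max s t₀ + min ε₁ ε₂ / 2) :=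
      ⟨by linarith [min_le_right s t₀], by linarith [le_max_right s t₀]⟩
    have hsolg : ∀ r ∈ Ioo (min s t₀ - min ε₁ ε₂ / 2) (max s t₀ + min ε₁ ε₂ / 2),
        HasDerivAt (fun r => ((h r, deriv h r) : ℝ × ℝ)) (w (h r, deriv h r)) r := by
      intro r hr
      have hrI := hIoo r hr
      have hb : cb ((h r, deriv h r) : ℝ × ℝ) = 1 := by
        apply hlev
        exact le_of_eq (hψ₀const r hrI)
      have hd := (hd1 r hrI).prodMk (hd2 r hrI)
      rw [hode r hrI] at hd
      convert hd using 1
      rw [hwdef]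
      show cb ((h r, deriv h r) : ℝ × ℝ) • ((deriv h r, -h r * (1 + 1 / 2 * (h r) ^ 2)) : ℝ × ℝ)
        = ((deriv h r, -h r * (1 + 1 / 2 * h r ^ 2)) : ℝ × ℝ)
      rw [hb, one_smul]
    have := ODE_solution_unique_of_mem_Ioo (v := fun _ => w) (s := fun _ => univ)
      (fun _ _ => hK.lipschitzOnWith) ht₀mem
      (fun r hr => ⟨hγw r, mem_univ _⟩)
      (fun r hr => ⟨hsolg r hr, mem_univ _⟩)
      (by rw [hγ0, hp₀def]) hsmem
    exact this
  -- regularity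
  have hderx : deriv x = y := funext fun t => (hxy t).deriv
  have hdery : deriv y = fun t => -x t * (1 + 1 / 2 * x t ^ 2) := funext fun t => (hyx t).deriv
  have hdiffx : Differentiable ℝ x := fun t => (hxy t).differentiableAt
  have hdiffy : Differentiable ℝ y := fun t => (hyx t).differentiableAt
  have hcx : Continuous x := hdiffx.continuous
  have hsmooth : ContDiff ℝ 2 x := by
    rw [show (2 : WithTop ℕ∞) = 1 + 1 by norm_num, contDiff_succ_iff_deriv]
    refine ⟨hdiffx, by simp, ?_⟩
    rw [hderx, show (1 : WithTop ℕ∞) = 0 + 1 by norm_num, contDiff_succ_iff_deriv]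
    refine ⟨hdiffy, by simp, ?_⟩
    rw [hdery, contDiff_zero]
    exact hcx.neg.mul (continuous_const.add (continuous_const.mul (hcx.pow 2)))
  -- the ODE for x
  have hodeX : ∀ s : ℝ, deriv (deriv x) s = -x s * (1 + 1 / 2 * x s ^ 2) := by
    intro s
    rw [hderx]
    exact (hyx s).deriv
  -- boundedness
  have hbound : ∀ t, |x t| ≤ Real.sqrt E₀ := by
    intro t
    have h1 : x t ^ 2 ≤ E₀ := by nlinarith [hψconst t, sq_nonneg (y t), sq_nonneg (x t ^ 2)]
    rw [← Real.sqrt_sq_eq_abs]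
    exact Real.sqrt_le_sqrt h1
  -- reflection symmetry at critical points
  have hrefl : ∀ a : ℝ, y a = 0 → ∀ s : ℝ, x (2 * a - s) = x s := by
    intro a hya s
    obtain ⟨δf, hδdef⟩ : ∃ δf : ℝ → ℝ × ℝ, δf = fun s => ((x (2 * a - s), -y (2 * a - s)) : ℝ × ℝ)
      := ⟨_, rfl⟩
    have hδw : ∀ s, HasDerivAt δf (w (δf s)) s := by
      intro s
      have hinner : HasDerivAt (fun s : ℝ => 2 * a - s) (-1) s := by
        simpa using (hasDerivAt_id s).const_sub (2 * a)
      have h1 : HasDerivAt (fun s => x (2 * a - s)) (y (2 * a - s) * (-1)) s :=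
        (hxy (2 * a - s)).comp s hinner
      have h2 : HasDerivAt (fun s => -y (2 * a - s))
          (-(-x (2 * a - s) * (1 + 1 / 2 * x (2 * a - s) ^ 2) * (-1))) s :=
        ((hyx (2 * a - s)).comp s hinner).neg
      have h3 := h1.prodMk h2
      rw [hδdef]
      convert h3 using 1
      have hb : cb ((x (2 * a - s), -y (2 * a - s)) : ℝ × ℝ) = 1 := by
        apply hlev
        have := hψconst (2 * a - s)
        show x (2 * a - s) ^ 2 + 1 / 4 * x (2 * a - s) ^ 4 + (-y (2 * a - s)) ^ 2 ≤ E₀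
        nlinarith
      rw [hwdef]
      show cb ((x (2 * a - s), -y (2 * a - s)) : ℝ × ℝ) •
          ((-y (2 * a - s), -(x (2 * a - s)) * (1 + 1 / 2 * (x (2 * a - s)) ^ 2)) : ℝ × ℝ)
        = ((y (2 * a - s) * (-1), -(-x (2 * a - s) * (1 + 1 / 2 * x (2 * a - s) ^ 2) * (-1)))
          : ℝ × ℝ)
      rw [hb, one_smul]
      simp only [Prod.mk.injEq]
      constructor <;> ring
    have hδa : δf a = γ a := by
      rw [hδdef]
      show ((x (2 * a - a), -y (2 * a - a)) : ℝ × ℝ) = γ a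
      rw [show 2 * a - a = a by ring, hya, neg_zero, ← hya]
      rw [hxdef, hydef]
    have huniq := stmt15_uniq hK hδw hγw (a := a) hδa s
    have : (δf s).1 = (γ s).1 := congrArg Prod.fst huniq
    rw [hδdef] at this
    simpa [hxdef] using this
  -- two critical points give periodicity
  obtain ⟨a, -, hya⟩ := stmt15_zero hxy hyx hbound 0
  obtain ⟨b, hab, hyb⟩ := stmt15_zero hxy hyx hbound (a + 1)
  have hper : Function.Periodic x (2 * (b - a)) := by
    intro s
    have h1 := hrefl a hya s
    have h2 := hrefl b hyb (2 * a - s)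
    calc x (s + 2 * (b - a)) = x (2 * b - (2 * a - s)) := by congr 1; ring
      _ = x (2 * a - s) := h2
      _ = x s := h1
  refine ⟨x, hsmooth, hodeX, ?_, ⟨Real.sqrt E₀, hbound⟩,
    fun _ => ⟨2 * (b - a), by linarith, hper⟩⟩
  intro s hs
  rw [hxdef]
  show (γ s).1 = h s
  rw [hgI s hs]
end
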